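/- Let S be a semigroup that satisfies Property (C₃). If S satisfies an identity u ≈ v, then con(u) = con(v) and lin(u) = lin(v). -/

import Mathlib

/-- The alphabet of variables. -/
abbrev Var := ℕ

/-- Words are (possibly empty) lists of variables; elements of the free
semigroup `𝔄⁺` are the nonempty ones. -/
abbrev Word := List Var

/-- Two words are of the same type if they agree after collapsing each
maximal constant run (island) to a single letter. -/
def sameType (u v : Word) : Prop :=
  u.destutter (· ≠ ·) = v.destutter (· ≠ ·)

/-- The number of islands of a word. -/
def height (u : Word) : ℕ := (u.destutter (· ≠ ·)).length

/-- The set of variables occurring in a word. -/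
def con (u : Word) : Set Var := {x | x ∈ u}

/-- `del u X` is the word obtained from `u` by deleting all occurrences of all
variables not in the list `X`; i.e. `u(x₁,…,x_k)` for `X = [x₁,…,x_k]`. -/
def del (u : Word) (X : List Var) : Word := u.filter (· ∈ X)

/-- The set of linear variables of `u` (occurring exactly once). -/
def lin (u : Word) : Set Var := {x | u.count x = 1}

/-- The set of non-linear variables of `u` (occurring at least twice). -/
def nonlin (u : Word) : Set Var := {x | 2 ≤ u.count x}

/-- The set of variables occurring exactly twice in `u`. -/
def con2 (u : Word) : Set Var := {x | u.count x = 2}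

/-- The set of variables occurring at least three times in `u`. -/
def conGt2 (u : Word) : Set Var := {x | 3 ≤ u.count x}

/-- Applying a substitution `Θ : 𝔄 → 𝔄⁺` to a word, as the extension of `Θ`
to a homomorphism. -/
def subst (Θ : Var → Word) (u : Word) : Word := u.flatMap Θ

/-- `w` is a power (with positive exponent) of the variable `c`. -/
def isPowerOf (w : Word) (c : Var) : Prop := ∃ k : ℕ, 0 < k ∧ w = List.replicate k c

/-- A monoid `M` satisfies the identity `u ≈ v` if every monoid homomorphism
from the free monoid `𝔄*` to `M` (equivalently, the extension of every map
`φ : 𝔄 → M`) identifies `u` and `v`. -/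
def MSat (M : Type) [Monoid M] (u v : Word) : Prop :=
  ∀ φ : Var → M, (u.map φ).prod = (v.map φ).prod

/-- Evaluation of a nonempty word in a semigroup under `φ : 𝔄 → S`
(the empty word evaluates to `none`). -/
def evalS {S : Type} [Semigroup S] (φ : Var → S) : Word → Option S
  | [] => none
  | a :: t => some ((t.map φ).foldl (· * ·) (φ a))

/-- A semigroup `S` satisfies the identity `u ≈ v` between nonempty words if
every semigroup homomorphism from the free semigroup `𝔄⁺` to `S` identifies
`u` and `v`. -/
def SSat (S : Type) [Semigroup S] (u v : Word) : Prop :=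
  ∀ φ : Var → S, evalS φ u = evalS φ v

/-- Property (C_ℓ) for a monoid: every word in two variables of height at most
`ℓ` can form an identity of `M` only with a word of the same type. -/
def MPropC (M : Type) [Monoid M] (ℓ : ℕ) : Prop :=
  ∀ x y : Var, x ≠ y → ∀ u : Word, u ≠ [] → (∀ c ∈ u, c = x ∨ c = y) →
    height u ≤ ℓ → ∀ v : Word, MSat M u v → sameType u v

/-- Property (C_ℓ) for a semigroup. -/
def SPropC (S : Type) [Semigroup S] (ℓ : ℕ) : Prop :=
  ∀ x y : Var, x ≠ y → ∀ u : Word, u ≠ [] → (∀ c ∈ u, c = x ∨ c = y) →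
    height u ≤ ℓ → ∀ v : Word, SSat S u v → sameType u v

/-- A monoid is finitely based if some finite set of identities it satisfies
entails all its identities (in every monoid). -/
def MonoidFB (M : Type) [Monoid M] : Prop :=
  ∃ Sig : Finset (Word × Word),
    (∀ p ∈ Sig, MSat M p.1 p.2) ∧
    ∀ (N : Type) [Monoid N], (∀ p ∈ Sig, MSat N p.1 p.2) →
      ∀ u v : Word, MSat M u v → MSat N u v

/-- A semigroup is finitely based if some finite set of identities (between
nonempty words) it satisfies entails all its identities (in every semigroup). -/
def SemigroupFB (S : Type) [Semigroup S] : Prop :=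
  ∃ Sig : Finset (Word × Word),
    (∀ p ∈ Sig, p.1 ≠ [] ∧ p.2 ≠ [] ∧ SSat S p.1 p.2) ∧
    ∀ (T : Type) [Semigroup T], (∀ p ∈ Sig, SSat T p.1 p.2) →
      ∀ u v : Word, u ≠ [] → v ≠ [] → SSat S u v → SSat T u v

/-- `B` is a block of `u` occurring as `u = p ++ B ++ s`: it contains no linear
variables of `u` and is maximal with this property. -/
def IsBlockAt (u p B s : Word) : Prop :=
  u = p ++ B ++ s ∧ (∀ c ∈ B, c ∉ lin u) ∧
  (∀ c : Var, p.getLast? = some c → c ∈ lin u) ∧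
  (∀ c : Var, s.head? = some c → c ∈ lin u)

/-- The word `Uₙ = (x₁⋯xₙ)(xₙ⋯x₁)(x₁⋯xₙ)`. -/
def Uword (n : ℕ) (x : Fin n → Var) : Word :=
  List.ofFn x ++ (List.ofFn x).reverse ++ List.ofFn x

/-- The word `Vₙ = (x₁⋯xₙ)(x₁²x₂²⋯xₙ²)`. -/
def Vword (n : ℕ) (x : Fin n → Var) : Word :=
  List.ofFn x ++ (List.ofFn x).flatMap (fun c => [c, c])


section StmtAux

open List

variable {S : Type} [Semigroup S]

private lemma foldl_mul_assoc' (s t : S) (l : List S) :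
    l.foldl (· * ·) (s * t) = s * l.foldl (· * ·) t := by
  induction l generalizing t with
  | nil => rfl
  | cons a l ih => simpa [mul_assoc] using ih (t * a)

private lemma evalS_some (φ : Var → S) (w : Word) (hw : w ≠ []) :
    ∃ A, evalS φ w = some A := by
  cases w with
  | nil => exact absurd rfl hw
  | cons a t => exact ⟨_, rfl⟩

private lemma evalS_append (φ : Var → S) (a b : Word) (A B : S)
    (hA : evalS φ a = some A) (hB : evalS φ b = some B) :
    evalS φ (a ++ b) = some (A * B) := by
  cases a with
  | nil => simp [evalS] at hA
  | cons c p =>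
    cases b with
    | nil => simp [evalS] at hB
    | cons d q =>
      simp only [evalS, Option.some.injEq] at hA hB
      show evalS φ (c :: (p ++ d :: q)) = _
      simp only [evalS, Option.some.injEq, List.map_append, List.map_cons,
        List.foldl_append, List.foldl_cons]
      rw [hA, foldl_mul_assoc', hB]

private lemma subst_cons (Θ : Var → Word) (a : Var) (t : Word) :
    subst Θ (a :: t) = Θ a ++ subst Θ t := rfl

private lemma subst_ne_nil (Θ : Var → Word) (hΘ : ∀ z, Θ z ≠ []) (w : Word)
    (hw : w ≠ []) : subst Θ w ≠ [] := by
  cases w with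
  | nil => exact absurd rfl hw
  | cons a t =>
    rw [subst_cons]
    simp [hΘ a]

private lemma evalS_subst (φ : Var → S) (Θ : Var → Word) (hΘ : ∀ z, Θ z ≠ [])
    (ψ : Var → S) (hψ : ∀ z, evalS φ (Θ z) = some (ψ z)) :
    ∀ w : Word, evalS φ (subst Θ w) = evalS ψ w := by
  intro w
  induction w with
  | nil => rfl
  | cons c t ih =>
    cases t with
    | nil =>
      show evalS φ (Θ c ++ []) = _
      rw [List.append_nil, hψ c]
      rfl
    | cons d t' =>
      obtain ⟨B, hB⟩ := evalS_some φ (subst Θ (d :: t')) (subst_ne_nil Θ hΘ _ (by simp))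
      have hB' : (t'.map ψ).foldl (· * ·) (ψ d) = B := by
        have h2 : evalS ψ (d :: t') = some B := ih ▸ hB
        simpa [evalS] using h2
      rw [subst_cons, evalS_append φ _ _ (ψ c) B (hψ c) hB]
      show _ = some (((d :: t').map ψ).foldl (· * ·) (ψ c))
      rw [List.map_cons, List.foldl_cons, foldl_mul_assoc', hB']

private lemma SSat_subst {u v : Word} (h : SSat S u v)
    (Θ : Var → Word) (hΘ : ∀ z, Θ z ≠ []) : SSat S (subst Θ u) (subst Θ v) := by
  intro φ
  have hψ : ∀ z, evalS φ (Θ z) = some ((evalS φ (Θ z)).getD (φ 0)) := by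
    intro z
    obtain ⟨A, hA⟩ := evalS_some φ (Θ z) (hΘ z)
    rw [hA]; rfl
  rw [evalS_subst φ Θ hΘ _ hψ u, evalS_subst φ Θ hΘ _ hψ v]
  exact h _

private lemma count_destutter' (x : Var) :
    ∀ (l : Word) (a : Var), List.Chain' (fun p q => p = x → q ≠ x) (a :: l) →
      (l.destutter' (· ≠ ·) a).count x = ((a :: l) : Word).count x := by
  intro l
  induction l with
  | nil => intro a _; simp [List.destutter'_nil]
  | cons b t ih =>
    intro a hch
    simp only [List.Chain'] at hch
    rw [List.isChain_cons_cons] at hch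
    obtain ⟨h1, h2⟩ := hch
    rw [List.destutter'_cons]
    by_cases hab : a ≠ b
    · rw [if_pos hab]
      simp [List.count_cons, ih b h2]
    · rw [if_neg hab]
      push_neg at hab
      subst hab
      have hax : a ≠ x := fun hx => (h1 hx) hx
      simp [List.count_cons, ih a h2, hax]

private lemma chain'_subst (x y : Var) (hyx : y ≠ x) (w : Word) :
    List.Chain' (fun p q => p = x → q ≠ x)
      (subst (fun z => if z = x then [y, x, y] else [y]) w) := by
  induction w with
  | nil => simp [subst, List.Chain']
  | cons c t ih =>
    rw [subst_cons]
    apply List.isChain_append.mpr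
    refine ⟨?_, ih, ?_⟩
    · by_cases hc : c = x <;> simp [hc, List.Chain', List.isChain_cons_cons, hyx]
    · intro p hp q _
      have hp' : p = y := by
        by_cases hc : c = x <;> simp [hc] at hp <;> exact hp.symm
      intro hpx
      exact absurd (hp' ▸ hpx) hyx

private lemma count_subst (x y : Var) (hyx : y ≠ x) (w : Word) :
    (subst (fun z => if z = x then [y, x, y] else [y]) w).count x = w.count x := by
  induction w with
  | nil => rfl
  | cons c t ih =>
    rw [subst_cons, List.count_append, ih]
    by_cases hc : c = x <;> simp [hc, List.count_cons, hyx] <;> omega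

private lemma mem_subst (x y : Var) (w : Word) :
    ∀ c ∈ subst (fun z => if z = x then [y, x, y] else [y]) w, c = x ∨ c = y := by
  intro c hc
  simp only [subst, List.mem_flatMap] at hc
  obtain ⟨z, _, hc⟩ := hc
  by_cases h : z = x <;> simp [h] at hc <;> tauto

private lemma length_le_three (x y : Var) (l : Word) (hch : List.Chain' (· ≠ ·) l)
    (hmem : ∀ c ∈ l, c = x ∨ c = y) (hcnt : l.count x ≤ 1) : l.length ≤ 3 := by
  match l with
  | [] => simp
  | [a] => simp
  | [a, b] => simp
  | [a, b, c] => simp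
  | a :: b :: c :: d :: t =>
    exfalso
    simp only [List.Chain'] at hch
    rw [List.isChain_cons_cons, List.isChain_cons_cons, List.isChain_cons_cons] at hch
    obtain ⟨hab, hbc, hcd, -⟩ := hch
    have ha := hmem a (by simp)
    have hb := hmem b (by simp)
    have hc' := hmem c (by simp)
    have hd := hmem d (by simp)
    have h2 : 2 ≤ ((a :: b :: c :: d :: t) : Word).count x := by
      rcases ha with rfl | rfl <;> rcases hb with rfl | rfl <;>
        rcases hc' with rfl | rfl <;> rcases hd with rfl | rfl <;>
        simp_all [List.count_cons] <;> omega
    omega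

private lemma key_count (hC3 : SPropC S 3) (u v : Word)
    (hu : u ≠ []) (hv : v ≠ []) (h : SSat S u v) (x : Var) (hx : u.count x ≤ 1) :
    u.count x = v.count x := by
  set y := x + 1 with hy
  have hyx : y ≠ x := by rw [hy]; exact Nat.succ_ne_self x
  set Θ : Var → Word := fun z => if z = x then [y, x, y] else [y] with hΘdef
  have hΘ : ∀ z, Θ z ≠ [] := by
    intro z; by_cases hz : z = x <;> simp [hΘdef, hz]
  have h' : SSat S (subst Θ u) (subst Θ v) := SSat_subst h Θ hΘ
  have hu' : subst Θ u ≠ [] := subst_ne_nil Θ hΘ u hu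
  have hv' : subst Θ v ≠ [] := subst_ne_nil Θ hΘ v hv
  have hdc : ∀ w : Word, w ≠ [] →
      ((subst Θ w).destutter (· ≠ ·)).count x = (subst Θ w).count x := by
    intro w hw
    obtain ⟨a, l, hal⟩ := List.exists_cons_of_ne_nil (subst_ne_nil Θ hΘ w hw)
    rw [hal, List.destutter_cons']
    exact count_destutter' x l a (hal ▸ chain'_subst x y hyx w)
  have hcntu : ((subst Θ u).destutter (· ≠ ·)).count x ≤ 1 := by
    rw [hdc u hu, count_subst x y hyx u]; exact hx
  have hht : height (subst Θ u) ≤ 3 := by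
    apply length_le_three x y _ (List.isChain_destutter _ _) _ hcntu
    intro c hcmem
    exact mem_subst x y u c ((List.destutter_sublist _ _).subset hcmem)
  have hst : sameType (subst Θ u) (subst Θ v) :=
    hC3 x y (fun hxx => hyx hxx.symm) (subst Θ u) hu' (mem_subst x y u) hht (subst Θ v) h'
  unfold sameType at hst
  rw [← count_subst x y hyx u, ← hdc u hu, hst, hdc v hv, count_subst x y hyx v]

end StmtAux

/-- identities of a semigroup with Property (C₃) preserve
content and linear variables. -/
theorem stmt11 (S : Type) [Semigroup S] (hC3 : SPropC S 3)
    (u v : Word) (hu : u ≠ []) (hv : v ≠ []) (h : SSat S u v) :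
    con u = con v ∧ lin u = lin v := by
  have hsym : SSat S v u := fun φ => (h φ).symm
  have key := fun z hz => key_count hC3 u v hu hv h z hz
  have key' := fun z hz => key_count hC3 v u hv hu hsym z hz
  constructor
  · ext z
    simp only [con, Set.mem_setOf_eq]
    constructor
    · intro hz
      by_contra hz'
      have h0 : v.count z = 0 := List.count_eq_zero.mpr hz'
      have h1 := key' z (by simp [h0])
      rw [h0] at h1
      exact absurd hz (List.count_eq_zero.mp h1.symm)
    · intro hz
      by_contra hz'
      have h0 : u.count z = 0 := List.count_eq_zero.mpr hz'
      have h1 := key z (by simp [h0])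
      rw [h0] at h1
      exact absurd hz (List.count_eq_zero.mp h1.symm)
  · ext z
    simp only [lin, Set.mem_setOf_eq]
    constructor
    · intro h1
      have := key z (by omega)
      omega
    · intro h1
      have := key' z (by omega)
      omega
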